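/- With the s-dependent orthogonal family setup, define κ_n(s)² := 2πi/h_n(s), B_n(s) := −p_{n+1}(0,s)/p_n(0,s) and, for n ≥ 1, C_n(s) := B_n(s)·h_n(s)/h_{n−1}(s), and assume the recursion z·(p_n(z,s) + C_n(s) p_{n−1}(z,s)) = p_{n+1}(z,s) + B_n(s) p_n(z,s) holds for all n ≥ 1 and s > 0. Then for every n ≥ 1 and s > 0 with κ_n(s)² ≠ κ_{n−1}(s)²: B_n(s) = −(d/ds κ_n(s)²)/(2 (κ_n(s)² − κ_{n−1}(s)²)). -/

import Mathlib

open Polynomial intervalIntegral MeasureTheory Finset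
open scoped Real

noncomputable def MM (j : ℤ) (s : ℝ) : ℂ :=
  ∫ θ in (0:ℝ)..(2*π), Complex.I * Complex.exp ((j:ℂ) * θ * Complex.I + 2 * s * Real.cos θ)

lemma contMM (j : ℤ) (s : ℝ) :
    Continuous fun θ : ℝ => Complex.I * Complex.exp ((j:ℂ) * θ * Complex.I + 2 * s * Real.cos θ) := by
  fun_prop

lemma MM_symm (j : ℤ) (s : ℝ) : MM j s = MM (-j) s := by
  have h := intervalIntegral.integral_comp_sub_left
    (a := (0:ℝ)) (b := 2*π)
    (fun θ : ℝ => Complex.I * Complex.exp (((-j : ℤ):ℂ) * θ * Complex.I + 2 * s * Real.cos θ)) (2*π)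
  simp only [sub_self, sub_zero] at h
  rw [MM, MM, ← h]
  congr 1
  ext θ
  congr 1
  push_cast
  rw [Complex.cos_sub, Complex.cos_two_pi, Complex.sin_two_pi]
  ring_nf
  rw [show (↑j * ↑θ * Complex.I - ↑j * Complex.I * ↑π * 2 + ↑s * Complex.cos ↑θ * 2 : ℂ)
      = (↑j * ↑θ * Complex.I + ↑s * Complex.cos ↑θ * 2) + ((-j : ℤ) : ℂ) * (2*↑π*Complex.I) by push_cast; ring,
    Complex.exp_add, Complex.exp_add, Complex.exp_int_mul_two_pi_mul_I, mul_one]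
  exact (Complex.exp_add _ _).symm

lemma ofReal_hasDerivAt {x : ℝ} : HasDerivAt (fun t : ℝ => (t : ℂ)) 1 x := by
  simpa using (hasDerivAt_id x).ofReal_comp

lemma inner_hasDerivAt (j : ℤ) (θ : ℝ) (x : ℝ) :
    HasDerivAt (fun t : ℝ => Complex.I * Complex.exp ((j:ℂ) * θ * Complex.I + 2 * t * Real.cos θ))
      ((2 * Real.cos θ : ℂ) * (Complex.I * Complex.exp ((j:ℂ) * θ * Complex.I + 2 * x * Real.cos θ))) x := by
  have h1 : HasDerivAt (fun t : ℝ => ((j:ℂ) * θ * Complex.I + 2 * t * Real.cos θ))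
      (2 * Real.cos θ : ℂ) x := by
    have h2 : HasDerivAt (fun t : ℝ => 2 * (t:ℂ) * Real.cos θ) (2 * Real.cos θ : ℂ) x := by
      have := (ofReal_hasDerivAt (x := x)).const_mul (2 : ℂ)
      have := this.mul_const ((Real.cos θ : ℂ))
      simpa [mul_one] using this
    simpa using h2.const_add ((j:ℂ) * θ * Complex.I)
  have := (h1.cexp).const_mul Complex.I
  convert this using 1
  · rfl
  ring

lemma MM_hasDerivAt (j : ℤ) (s : ℝ) :
    HasDerivAt (MM j) (MM (j+1) s + MM (j-1) s) s := by
  have key : HasDerivAt (fun x : ℝ => ∫ θ in (0:ℝ)..(2*π),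
        Complex.I * Complex.exp ((j:ℂ) * θ * Complex.I + 2 * (x:ℂ) * Real.cos θ))
      (∫ θ in (0:ℝ)..(2*π),
        (2 * (Real.cos θ:ℂ)) * (Complex.I * Complex.exp ((j:ℂ) * θ * Complex.I + 2 * (s:ℂ) * Real.cos θ))) s := by
    have := intervalIntegral.hasDerivAt_integral_of_dominated_loc_of_deriv_le
      (𝕜 := ℝ) (μ := MeasureTheory.volume) (a := (0:ℝ)) (b := 2*π)
      (F := fun (x : ℝ) θ => Complex.I * Complex.exp ((j:ℂ) * θ * Complex.I + 2 * (x:ℂ) * Real.cos θ))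
      (F' := fun (x : ℝ) θ => (2 * (Real.cos θ:ℂ)) * (Complex.I * Complex.exp ((j:ℂ) * θ * Complex.I + 2 * (x:ℂ) * Real.cos θ)))
      (x₀ := s) (bound := fun _ => 2 * Real.exp (2 * (|s| + 1)))
      (s := Metric.ball s 1) (Metric.ball_mem_nhds s one_pos)
      (Filter.Eventually.of_forall fun x => ((contMM j x).aestronglyMeasurable).restrict)
      ((contMM j s).intervalIntegrable _ _)
      ((((continuous_const.mul (Complex.continuous_ofReal.comp Real.continuous_cos)).mul (contMM j s))).aestronglyMeasurable.restrict)
      ?_ (intervalIntegrable_const) ?_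
    · exact this.2
    · refine Filter.Eventually.of_forall fun θ _ => fun x hx => ?_
      have hxb : |x| ≤ |s| + 1 := by
        have := abs_sub_abs_le_abs_sub x s
        have h2 : |x - s| < 1 := by simpa [Real.dist_eq] using hx
        linarith
      have h3 : ‖(2 * (Real.cos θ:ℂ))‖ ≤ 2 := by
        rw [norm_mul]
        simp only [Complex.norm_real, Complex.norm_ofNat, Real.norm_eq_abs]
        nlinarith [Real.abs_cos_le_one θ, abs_nonneg (Real.cos θ)]
      have h4 : ‖Complex.I * Complex.exp ((j:ℂ) * θ * Complex.I + 2 * (x:ℂ) * Real.cos θ)‖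
          ≤ Real.exp (2 * (|s| + 1)) := by
        rw [norm_mul, Complex.norm_I, one_mul, Complex.norm_exp]
        apply Real.exp_le_exp.2
        have hre : ((j:ℂ) * θ * Complex.I + 2 * (x:ℂ) * Real.cos θ).re = 2 * x * Real.cos θ := by
          simp [Complex.add_re, Complex.mul_re, Complex.I_re, Complex.I_im,
            Complex.cos_ofReal_re]
        rw [hre]
        calc 2 * x * Real.cos θ ≤ |2 * x * Real.cos θ| := le_abs_self _
          _ = 2 * |x| * |Real.cos θ| := by rw [abs_mul, abs_mul, abs_two]
          _ ≤ 2 * (|s| + 1) * 1 := by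
              apply mul_le_mul (by nlinarith) (Real.abs_cos_le_one θ) (abs_nonneg _) (by positivity)
          _ = 2 * (|s| + 1) := mul_one _
      calc ‖(2 * (Real.cos θ:ℂ)) * (Complex.I * Complex.exp ((j:ℂ) * θ * Complex.I + 2 * (x:ℂ) * Real.cos θ))‖
          = ‖(2 * (Real.cos θ:ℂ))‖ * ‖Complex.I * Complex.exp ((j:ℂ) * θ * Complex.I + 2 * (x:ℂ) * Real.cos θ)‖ := norm_mul _ _
        _ ≤ 2 * Real.exp (2 * (|s| + 1)) := by
            apply mul_le_mul h3 h4 (norm_nonneg _) (by norm_num)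
    · exact Filter.Eventually.of_forall fun θ _ => fun x _ => inner_hasDerivAt j θ x
  have eq2 : (∫ θ in (0:ℝ)..(2*π),
        (2 * (Real.cos θ:ℂ)) * (Complex.I * Complex.exp ((j:ℂ) * θ * Complex.I + 2 * (s:ℂ) * Real.cos θ)))
      = MM (j+1) s + MM (j-1) s := by
    rw [MM, MM, ← intervalIntegral.integral_add ((contMM (j+1) s).intervalIntegrable _ _)
      ((contMM (j-1) s).intervalIntegrable _ _)]
    congr 1
    ext θ
    push_cast
    have e1 : ((j:ℂ)+1) * θ * Complex.I + 2 * s * Complex.cos θ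
        = ((j:ℂ) * θ * Complex.I + 2 * s * Complex.cos θ) + θ * Complex.I := by ring
    have e2 : ((j:ℂ)-1) * θ * Complex.I + 2 * s * Complex.cos θ
        = ((j:ℂ) * θ * Complex.I + 2 * s * Complex.cos θ) + (-(θ * Complex.I)) := by ring
    rw [e1, e2, Complex.exp_add ((j:ℂ) * θ * Complex.I + 2 * s * Complex.cos θ),
      Complex.exp_add ((j:ℂ) * θ * Complex.I + 2 * s * Complex.cos θ)]
    have hsum : Complex.exp ((θ:ℂ) * Complex.I) + Complex.exp (-((θ:ℂ) * Complex.I))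
        = 2 * Complex.cos (θ:ℂ) := by
      rw [show -((θ:ℂ)*Complex.I) = (-(θ:ℂ))*Complex.I by ring, Complex.exp_mul_I,
        Complex.exp_mul_I, Complex.cos_neg, Complex.sin_neg]
      ring
    linear_combination (-(Complex.I * Complex.exp ((j:ℂ) * θ * Complex.I + 2 * s * Complex.cos θ))) * hsum
  rw [← eq2]
  have hMM : MM j = fun x : ℝ => ∫ θ in (0:ℝ)..(2*π),
      Complex.I * Complex.exp ((j:ℂ) * θ * Complex.I + 2 * (x:ℂ) * Real.cos θ) := rfl
  rw [hMM]
  exact key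

lemma two_cos (s θ : ℝ) :
    (s:ℂ) * (Complex.exp ((θ:ℂ)*Complex.I) + (Complex.exp ((θ:ℂ)*Complex.I))⁻¹)
      = 2*s*Real.cos θ := by
  rw [← Complex.exp_neg]
  have hsum : Complex.exp ((θ:ℂ) * Complex.I) + Complex.exp (-((θ:ℂ) * Complex.I))
      = 2 * Complex.cos (θ:ℂ) := by
    rw [show -((θ:ℂ)*Complex.I) = (-(θ:ℂ))*Complex.I by ring, Complex.exp_mul_I,
      Complex.exp_mul_I, Complex.cos_neg, Complex.sin_neg]
    ring
  rw [hsum]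
  push_cast
  ring

lemma II_eq (f g : Polynomial ℂ) {N : ℕ} (hf : f.natDegree < N) (hg : g.natDegree < N) (s : ℝ) :
    (∮ z in C(0,1), f.eval z * g.eval z⁻¹ * Complex.exp ((s:ℂ)*(z+z⁻¹)) / z)
      = ∑ k ∈ Finset.range N, ∑ l ∈ Finset.range N,
          f.coeff k * g.coeff l * MM ((k:ℤ) - (l:ℤ)) s := by
  have h1 : ∀ θ : ℝ, deriv (circleMap 0 1) θ •
        (f.eval (circleMap 0 1 θ) * g.eval ((circleMap 0 1 θ))⁻¹ *
          Complex.exp ((s:ℂ)*((circleMap 0 1 θ)+(circleMap 0 1 θ)⁻¹)) / (circleMap 0 1 θ))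
      = ∑ k ∈ Finset.range N, ∑ l ∈ Finset.range N,
          f.coeff k * g.coeff l *
            (Complex.I * Complex.exp (((k:ℤ) - (l:ℤ) : ℤ) * (θ:ℂ) * Complex.I + 2*s*Real.cos θ)) := by
    intro θ
    have hz : Complex.exp ((θ:ℂ)*Complex.I) ≠ 0 := Complex.exp_ne_zero _
    rw [deriv_circleMap]
    simp only [circleMap, zero_add, Complex.ofReal_one, one_mul, smul_eq_mul]
    rw [two_cos, Polynomial.eval_eq_sum_range' hf, Polynomial.eval_eq_sum_range' hg,
      Finset.sum_mul_sum]
    simp only [Finset.sum_mul, Finset.sum_div, Finset.mul_sum]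
    refine Finset.sum_congr rfl fun k _ => Finset.sum_congr rfl fun l _ => ?_
    have hexp : Complex.exp ((((k:ℤ) - (l:ℤ) : ℤ):ℂ) * (θ:ℂ) * Complex.I + 2*s*Real.cos θ)
        = (Complex.exp ((θ:ℂ)*Complex.I))^k * ((Complex.exp ((θ:ℂ)*Complex.I))^l)⁻¹ *
          Complex.exp ((2*s*Real.cos θ : ℝ):ℂ) := by
      rw [← Complex.exp_nat_mul, ← Complex.exp_nat_mul, ← Complex.exp_neg, ← Complex.exp_add,
        ← Complex.exp_add]
      congr 1
      push_cast
      ring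
    rw [show ((2:ℂ)*s*Real.cos θ) = ((2*s*Real.cos θ : ℝ):ℂ) by push_cast; ring] at *
    rw [hexp]
    field_simp
    ring
    rw [inv_pow, mul_assoc, mul_inv_cancel₀ (pow_ne_zero _ hz), mul_one]
  rw [circleIntegral, intervalIntegral.integral_congr (fun θ _ => h1 θ)]
  rw [intervalIntegral.integral_finset_sum (f := fun k θ => ∑ l ∈ Finset.range N, f.coeff k * g.coeff l *
      (Complex.I * Complex.exp (((k:ℤ) - (l:ℤ) : ℤ) * (θ:ℂ) * Complex.I + 2*s*Real.cos θ))) (fun k _ =>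
    (continuous_finset_sum _ fun l _ => continuous_const.mul (contMM _ s)).intervalIntegrable _ _)]
  refine Finset.sum_congr rfl fun k _ => ?_
  rw [intervalIntegral.integral_finset_sum (f := fun l θ => f.coeff k * g.coeff l *
      (Complex.I * Complex.exp (((k:ℤ) - (l:ℤ) : ℤ) * (θ:ℂ) * Complex.I + 2*s*Real.cos θ))) (fun l _ =>
    (continuous_const.mul (contMM _ s)).intervalIntegrable _ _)]
  refine Finset.sum_congr rfl fun l _ => ?_
  rw [intervalIntegral.integral_const_mul]
  rfl

noncomputable def II (f g : Polynomial ℂ) (s : ℝ) : ℂ :=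
  ∮ z in C(0,1), f.eval z * g.eval z⁻¹ * Complex.exp ((s:ℂ)*(z+z⁻¹)) / z

lemma II_symm (f g : Polynomial ℂ) (s : ℝ) : II f g s = II g f s := by
  set N := max f.natDegree g.natDegree + 1 with hN
  have hf : f.natDegree < N := by omega
  have hg : g.natDegree < N := by omega
  rw [II, II, II_eq f g hf hg, II_eq g f hg hf, Finset.sum_comm]
  refine Finset.sum_congr rfl fun k _ => Finset.sum_congr rfl fun l _ => ?_
  rw [show ((l:ℤ) - (k:ℤ)) = -((k:ℤ) - (l:ℤ)) by ring, ← MM_symm]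
  ring

lemma II_add (f₁ f₂ g : Polynomial ℂ) (s : ℝ) :
    II (f₁ + f₂) g s = II f₁ g s + II f₂ g s := by
  set N := max (max f₁.natDegree f₂.natDegree) ((f₁+f₂).natDegree ⊔ g.natDegree) + 1 with hN
  have h1 : f₁.natDegree < N := by omega
  have h2 : f₂.natDegree < N := by omega
  have h3 : (f₁+f₂).natDegree < N := by omega
  have h4 : g.natDegree < N := by omega
  rw [II, II, II, II_eq _ g h3 h4, II_eq _ g h1 h4, II_eq _ g h2 h4,
    ← Finset.sum_add_distrib]
  refine Finset.sum_congr rfl fun k _ => ?_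
  rw [← Finset.sum_add_distrib]
  refine Finset.sum_congr rfl fun l _ => ?_
  rw [Polynomial.coeff_add]
  ring

lemma II_smul (a : ℂ) (f g : Polynomial ℂ) (s : ℝ) :
    II (Polynomial.C a * f) g s = a * II f g s := by
  set N := max (Polynomial.C a * f).natDegree (f.natDegree ⊔ g.natDegree) + 1 with hN
  have h1 : (Polynomial.C a * f).natDegree < N := by omega
  have h2 : f.natDegree < N := by omega
  have h3 : g.natDegree < N := by omega
  rw [II, II, II_eq _ g h1 h3, II_eq _ g h2 h3, Finset.mul_sum]
  refine Finset.sum_congr rfl fun k _ => ?_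
  rw [Finset.mul_sum]
  refine Finset.sum_congr rfl fun l _ => ?_
  rw [Polynomial.coeff_C_mul]
  ring

lemma II_zero (g : Polynomial ℂ) (s : ℝ) : II 0 g s = 0 := by
  have h1 : (0 : Polynomial ℂ).natDegree < g.natDegree + 1 := by simp
  have h3 : g.natDegree < g.natDegree + 1 := by omega
  rw [II, II_eq _ g h1 h3]
  simp
theorem stmt_14
    (p : ℕ → ℝ → Polynomial ℂ)
    (hmonic : ∀ n s, 0 < s → (p n s).Monic)
    (hdeg : ∀ n s, 0 < s → (p n s).natDegree = n)
    (hreal : ∀ n s, 0 < s → ∀ k, ((p n s).coeff k).im = 0)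
    (hp0 : ∀ n s, 0 < s → (p n s).coeff 0 ≠ 0)
    (horth : ∀ (n m : ℕ) (s : ℝ), 0 < s → n ≠ m →
      (∮ z in C(0, 1), (p n s).eval z * (p m s).eval z⁻¹ *
        Complex.exp (s * (z + z⁻¹)) / z) = 0)
    (h : ℕ → ℝ → ℂ)
    (hh : ∀ (n : ℕ) (s : ℝ), 0 < s → h n s =
      ∮ z in C(0, 1), (p n s).eval z * (p n s).eval z⁻¹ *
        Complex.exp (s * (z + z⁻¹)) / z)
    (hne : ∀ (n : ℕ) (s : ℝ), 0 < s → h n s ≠ 0)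
    (hcoeffdiff : ∀ (n k : ℕ), k ≤ n →
      DifferentiableOn ℝ (fun s => (p n s).coeff k) (Set.Ioi (0 : ℝ)))
    (κsq : ℕ → ℝ → ℂ)
    (hκ : ∀ (n : ℕ) (s : ℝ), κsq n s = 2 * Real.pi * Complex.I / h n s)
    (Bn Cn : ℕ → ℝ → ℂ)
    (hB : ∀ (n : ℕ) (s : ℝ), 0 < s → Bn n s = -((p (n + 1) s).coeff 0 / (p n s).coeff 0))
    (hC : ∀ (n : ℕ) (s : ℝ), 1 ≤ n → 0 < s → Cn n s = Bn n s * h n s / h (n - 1) s)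
    (hrec : ∀ (n : ℕ) (s : ℝ), 1 ≤ n → 0 < s →
      Polynomial.X * (p n s + Polynomial.C (Cn n s) * p (n - 1) s) =
        p (n + 1) s + Polynomial.C (Bn n s) * p n s)
    (n : ℕ) (s : ℝ) (hn : 1 ≤ n) (hs : 0 < s)
    (hk : κsq n s ≠ κsq (n - 1) s) :
    Bn n s = -(deriv (κsq n) s) / (2 * (κsq n s - κsq (n - 1) s)) := by
  classical
  have hn0 : h n s ≠ 0 := hne n s hs
  have hm0 : h (n-1) s ≠ 0 := hne (n-1) s hs
  have horthII : ∀ a b : ℕ, a ≠ b → II (p a s) (p b s) s = 0 :=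
    fun a b hab => horth a b s hs hab
  have hhII : ∀ a, II (p a s) (p a s) s = h a s := fun a => (hh a s hs).symm
  -- extended orthogonality
  have ortho : ∀ q : Polynomial ℂ, q.degree < (n : ℕ) → II q (p n s) s = 0 := by
    have key : ∀ m : ℕ, ∀ q : Polynomial ℂ, q.natDegree ≤ m → q.degree < (n:ℕ) →
        II q (p n s) s = 0 := by
      intro m
      induction m with
      | zero =>
        intro q hq _
        have hq1 : q = Polynomial.C (q.coeff 0) := Polynomial.eq_C_of_natDegree_le_zero hq
        have hp0eq : p 0 s = 1 :=
          (hmonic 0 s hs).natDegree_eq_zero.mp (hdeg 0 s hs)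
        have hq2 : q = Polynomial.C (q.coeff 0) * p 0 s := by
          rw [hp0eq, mul_one]; exact hq1
        rw [hq2, II_smul, horthII 0 n (by omega), mul_zero]
      | succ m ih =>
        intro q hq hqn
        by_cases h0 : q.natDegree ≤ m
        · exact ih q h0 hqn
        · have hdq : q.natDegree = m + 1 := by omega
          have hq0 : q ≠ 0 := fun hcon => by simp [hcon] at hdq
          have hlc : q.leadingCoeff ≠ 0 := Polynomial.leadingCoeff_ne_zero.mpr hq0
          have hqdeg : q.degree = ((m+1 : ℕ) : WithBot ℕ) := by
            rw [Polynomial.degree_eq_natDegree hq0, hdq]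
          have hdn' : m + 1 < n := by
            rw [hqdeg] at hqn
            exact_mod_cast hqn
          have hpd := hmonic (m+1) s hs
          have hpddeg := hdeg (m+1) s hs
          have hCPdeg : (Polynomial.C q.leadingCoeff * p (m+1) s).degree = q.degree := by
            rw [Polynomial.degree_C_mul hlc, Polynomial.degree_eq_natDegree hpd.ne_zero,
              hpddeg, hqdeg]
          have hCPlc : q.leadingCoeff = (Polynomial.C q.leadingCoeff * p (m+1) s).leadingCoeff := by
            rw [Polynomial.leadingCoeff_mul, Polynomial.leadingCoeff_C, hpd.leadingCoeff, mul_one]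
          have hrdeg : (q - Polynomial.C q.leadingCoeff * p (m+1) s).degree < q.degree :=
            Polynomial.degree_sub_lt hCPdeg.symm hq0 hCPlc
          have hq3 : q = Polynomial.C q.leadingCoeff * p (m+1) s
              + (q - Polynomial.C q.leadingCoeff * p (m+1) s) := by ring
          rw [hq3, II_add, II_smul, horthII (m+1) n (by omega), mul_zero, zero_add]
          by_cases hr0 : q - Polynomial.C q.leadingCoeff * p (m+1) s = 0
          · rw [hr0]; exact II_zero _ _
          · apply ih
            · have := Polynomial.natDegree_lt_natDegree hr0 hrdeg
              omega
            · calc (q - Polynomial.C q.leadingCoeff * p (m+1) s).degree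
                  < q.degree := hrdeg
                _ < (n:ℕ) := hqn
    intro q hq
    exact key q.natDegree q le_rfl hq
  -- derivative of h n
  obtain ⟨N, hNdef⟩ : ∃ N, N = n + 1 := ⟨n+1, rfl⟩
  have hpN : ∀ t : ℝ, 0 < t → (p n t).natDegree < N := fun t ht => by rw [hdeg n t ht]; omega
  set cc : ℕ → ℝ → ℂ := fun k t => (p n t).coeff k with hccdef
  set dd : ℕ → ℂ := fun k => deriv (fun t => (p n t).coeff k) s with hdddef
  have hcd : ∀ k, k ≤ n → HasDerivAt (cc k) (dd k) s := by
    intro k hk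
    exact ((hcoeffdiff n k hk).differentiableAt (Ioi_mem_nhds hs)).hasDerivAt
  have hddn : dd n = 0 := by
    have hev : (fun t => (p n t).coeff n) =ᶠ[nhds s] (fun _ => (1:ℂ)) := by
      filter_upwards [Ioi_mem_nhds hs] with t ht
      have := (hmonic n t ht).coeff_natDegree
      rwa [hdeg n t ht] at this
    rw [hdddef]
    simp only []
    rw [Filter.EventuallyEq.deriv_eq hev, deriv_const]
  have hDsum : HasDerivAt
      (fun t => ∑ k ∈ Finset.range N, ∑ l ∈ Finset.range N, cc k t * cc l t * MM ((k:ℤ)-(l:ℤ)) t)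
      (∑ k ∈ Finset.range N, ∑ l ∈ Finset.range N,
        ((dd k * cc l s + cc k s * dd l) * MM ((k:ℤ)-(l:ℤ)) s
          + cc k s * cc l s * (MM ((k:ℤ)-(l:ℤ)+1) s + MM ((k:ℤ)-(l:ℤ)-1) s))) s := by
    apply HasDerivAt.fun_sum
    intro k hk
    apply HasDerivAt.fun_sum
    intro l hl
    have hk' : k ≤ n := by
      have := Finset.mem_range.mp hk; omega
    have hl' : l ≤ n := by
      have := Finset.mem_range.mp hl; omega
    exact ((hcd k hk').mul (hcd l hl')).mul (MM_hasDerivAt ((k:ℤ)-(l:ℤ)) s)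
  have hrep : (h n) =ᶠ[nhds s]
      (fun t => ∑ k ∈ Finset.range N, ∑ l ∈ Finset.range N, cc k t * cc l t * MM ((k:ℤ)-(l:ℤ)) t) := by
    filter_upwards [Ioi_mem_nhds hs] with t ht
    rw [hh n t ht]
    exact II_eq (p n t) (p n t) (hpN t ht) (hpN t ht) t
  have hDh : HasDerivAt (h n)
      (∑ k ∈ Finset.range N, ∑ l ∈ Finset.range N,
        ((dd k * cc l s + cc k s * dd l) * MM ((k:ℤ)-(l:ℤ)) s
          + cc k s * cc l s * (MM ((k:ℤ)-(l:ℤ)+1) s + MM ((k:ℤ)-(l:ℤ)-1) s))) s :=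
    hDsum.congr_of_eventuallyEq hrep
  -- the derivative polynomial q
  set qd : Polynomial ℂ := ∑ i ∈ Finset.range N, Polynomial.monomial i (dd i) with hqd
  have hqdc : ∀ k, qd.coeff k = if k ∈ Finset.range N then dd k else 0 := by
    intro k
    rw [hqd, Polynomial.finset_sum_coeff]
    simp only [Polynomial.coeff_monomial]
    exact Finset.sum_ite_eq' (Finset.range N) k dd
  have hqddeg : qd.degree < ((n:ℕ) : WithBot ℕ) := by
    rw [Polynomial.degree_lt_iff_coeff_zero]
    intro m hm
    have hm' : n ≤ m := by exact_mod_cast hm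
    rw [hqdc]
    by_cases hmN : m ∈ Finset.range N
    · have : m = n := by have := Finset.mem_range.mp hmN; omega
      rw [if_pos hmN, this, hddn]
    · rw [if_neg hmN]
  have hqdN : qd.natDegree < N := by
    have : qd.natDegree ≤ n := Polynomial.natDegree_le_iff_degree_le.mpr (le_of_lt hqddeg)
    omega
  -- identify the four sums
  have hS1 : (∑ k ∈ Finset.range N, ∑ l ∈ Finset.range N,
      dd k * cc l s * MM ((k:ℤ)-(l:ℤ)) s) = II qd (p n s) s := by
    rw [II, II_eq qd (p n s) hqdN (hpN s hs) s]
    refine Finset.sum_congr rfl fun k hk => Finset.sum_congr rfl fun l _ => ?_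
    rw [hqdc, if_pos hk]
  have hS2 : (∑ k ∈ Finset.range N, ∑ l ∈ Finset.range N,
      cc k s * dd l * MM ((k:ℤ)-(l:ℤ)) s) = II (p n s) qd s := by
    rw [II, II_eq (p n s) qd (hpN s hs) hqdN s]
    refine Finset.sum_congr rfl fun k _ => Finset.sum_congr rfl fun l hl => ?_
    rw [hqdc, if_pos hl]
  have hXpdegN : (Polynomial.X * p n s).natDegree < N + 1 := by
    have h1 : (Polynomial.X * p n s).natDegree ≤ 1 + n := by
      calc (Polynomial.X * p n s).natDegree
          ≤ (Polynomial.X : Polynomial ℂ).natDegree + (p n s).natDegree :=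
            Polynomial.natDegree_mul_le
        _ = 1 + n := by rw [Polynomial.natDegree_X, hdeg n s hs]
    omega
  have hpN1 : (p n s).natDegree < N + 1 := by rw [hdeg n s hs]; omega
  have hcoeffN : (p n s).coeff N = 0 :=
    Polynomial.coeff_eq_zero_of_natDegree_lt (by rw [hdeg n s hs]; omega)
  have hXp0 : (Polynomial.X * p n s).coeff 0 = 0 := by
    rw [Polynomial.mul_coeff_zero, Polynomial.coeff_X_zero, zero_mul]
  have hS3 : (∑ k ∈ Finset.range N, ∑ l ∈ Finset.range N,
      cc k s * cc l s * MM ((k:ℤ)-(l:ℤ)+1) s) = II (Polynomial.X * p n s) (p n s) s := by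
    rw [II, II_eq (Polynomial.X * p n s) (p n s) hXpdegN hpN1 s,
      Finset.sum_range_succ']
    simp only [hXp0, zero_mul, Finset.sum_const_zero, add_zero]
    refine Finset.sum_congr rfl fun k _ => ?_
    rw [Finset.sum_range_succ]
    simp only [hcoeffN, mul_zero, zero_mul, add_zero]
    refine Finset.sum_congr rfl fun l _ => ?_
    rw [Polynomial.coeff_X_mul,
      show ((k+1 : ℕ):ℤ) - (l:ℤ) = (k:ℤ) - (l:ℤ) + 1 by push_cast; ring]
  have hS4 : (∑ k ∈ Finset.range N, ∑ l ∈ Finset.range N,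
      cc k s * cc l s * MM ((k:ℤ)-(l:ℤ)-1) s) = II (p n s) (Polynomial.X * p n s) s := by
    rw [II, II_eq (p n s) (Polynomial.X * p n s) hpN1 hXpdegN s,
      Finset.sum_range_succ]
    simp only [hcoeffN, zero_mul, Finset.sum_const_zero, add_zero]
    refine Finset.sum_congr rfl fun k _ => ?_
    rw [Finset.sum_range_succ']
    simp only [hXp0, mul_zero, zero_mul, add_zero]
    refine Finset.sum_congr rfl fun l _ => ?_
    rw [Polynomial.coeff_X_mul,
      show (k:ℤ) - ((l+1 : ℕ):ℤ) = (k:ℤ) - (l:ℤ) - 1 by push_cast; ring]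
  -- recursion identity
  have hXprec : II (Polynomial.X * p n s) (p n s) s = (Bn n s - Cn n s) * h n s := by
    have hr' := hrec n s hn hs
    have hXpn : Polynomial.X * p n s = p (n+1) s + Polynomial.C (Bn n s) * p n s
        + Polynomial.C (-(Cn n s)) * (Polynomial.X * p (n-1) s) := by
      rw [map_neg]
      linear_combination hr'
    have hmX : (Polynomial.X * p (n-1) s).Monic :=
      (Polynomial.monic_X).mul (hmonic (n-1) s hs)
    have hmXdeg : (Polynomial.X * p (n-1) s).natDegree = n := by
      rw [(Polynomial.monic_X).natDegree_mul (hmonic (n-1) s hs), Polynomial.natDegree_X,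
        hdeg (n-1) s hs]
      omega
    have hXpm : II (Polynomial.X * p (n-1) s) (p n s) s = h n s := by
      have hsplit : Polynomial.X * p (n-1) s
          = p n s + (Polynomial.X * p (n-1) s - p n s) := by ring
      have hrd : (Polynomial.X * p (n-1) s - p n s).degree < ((n : ℕ) : WithBot ℕ) := by
        have h1 : (Polynomial.X * p (n-1) s).degree = ((n:ℕ) : WithBot ℕ) := by
          rw [Polynomial.degree_eq_natDegree hmX.ne_zero, hmXdeg]
        have h2 : (Polynomial.X * p (n-1) s - p n s).degree
            < (Polynomial.X * p (n-1) s).degree := by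
          apply Polynomial.degree_sub_lt
          · rw [h1, Polynomial.degree_eq_natDegree (hmonic n s hs).ne_zero, hdeg n s hs]
          · exact hmX.ne_zero
          · rw [hmX.leadingCoeff, (hmonic n s hs).leadingCoeff]
        rwa [h1] at h2
      rw [hsplit, II_add, hhII n, ortho _ hrd, add_zero]
    rw [hXpn, II_add, II_add, II_smul, II_smul, horthII (n+1) n (by omega), hhII n, hXpm]
    ring
  -- put the derivative together
  have hE : (∑ k ∈ Finset.range N, ∑ l ∈ Finset.range N,
        ((dd k * cc l s + cc k s * dd l) * MM ((k:ℤ)-(l:ℤ)) s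
          + cc k s * cc l s * (MM ((k:ℤ)-(l:ℤ)+1) s + MM ((k:ℤ)-(l:ℤ)-1) s)))
      = 2 * (Bn n s - Cn n s) * h n s := by
    have hsplit : (∑ k ∈ Finset.range N, ∑ l ∈ Finset.range N,
        ((dd k * cc l s + cc k s * dd l) * MM ((k:ℤ)-(l:ℤ)) s
          + cc k s * cc l s * (MM ((k:ℤ)-(l:ℤ)+1) s + MM ((k:ℤ)-(l:ℤ)-1) s)))
      = (∑ k ∈ Finset.range N, ∑ l ∈ Finset.range N, dd k * cc l s * MM ((k:ℤ)-(l:ℤ)) s)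
        + (∑ k ∈ Finset.range N, ∑ l ∈ Finset.range N, cc k s * dd l * MM ((k:ℤ)-(l:ℤ)) s)
        + (∑ k ∈ Finset.range N, ∑ l ∈ Finset.range N, cc k s * cc l s * MM ((k:ℤ)-(l:ℤ)+1) s)
        + (∑ k ∈ Finset.range N, ∑ l ∈ Finset.range N, cc k s * cc l s * MM ((k:ℤ)-(l:ℤ)-1) s) := by
      rw [← Finset.sum_add_distrib, ← Finset.sum_add_distrib, ← Finset.sum_add_distrib]
      refine Finset.sum_congr rfl fun k _ => ?_
      rw [← Finset.sum_add_distrib, ← Finset.sum_add_distrib, ← Finset.sum_add_distrib]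
      refine Finset.sum_congr rfl fun l _ => ?_
      ring
    rw [hsplit, hS1, hS2, hS3, hS4, ortho qd hqddeg, II_symm (p n s) qd, ortho qd hqddeg,
      II_symm (p n s) (Polynomial.X * p n s), hXprec]
    ring
  rw [hE] at hDh
  -- final algebra
  have hκfun : κsq n = fun t => 2*(Real.pi:ℂ)*Complex.I / h n t := funext fun t => hκ n t
  have hder : HasDerivAt (κsq n)
      ((0 * h n s - (2*(Real.pi:ℂ)*Complex.I) * (2 * (Bn n s - Cn n s) * h n s)) / (h n s)^2) s := by
    rw [hκfun]
    exact (hasDerivAt_const s _).div hDh hn0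
  have hΔ : κsq n s - κsq (n-1) s ≠ 0 := sub_ne_zero.mpr hk
  have hπ : ((Real.pi:ℝ) : ℂ) ≠ 0 := by
    exact_mod_cast Real.pi_ne_zero
  have hHne : h (n-1) s ≠ h n s := by
    intro hceq
    exact hk (by rw [hκ n s, hκ (n-1) s, hceq])
  rw [hder.deriv, hC n s hn hs]
  rw [hκ n s, hκ (n-1) s] at hΔ ⊢
  have hI : (Complex.I : ℂ) ≠ 0 := Complex.I_ne_zero
  set H1 := h n s
  set H2 := h (n-1) s
  have hden : (2 * (2*(π:ℝ)*Complex.I / H1 - 2*(π:ℝ)*Complex.I / H2)) ≠ 0 :=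
    mul_ne_zero two_ne_zero hΔ
  rw [eq_div_iff hden]
  field_simp
  ring
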